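/- arXiv:0912.1332 — 4 statements merged into one kernel-verified Lean document; each statement's English description precedes it below -/
import Mathlib

section
/- Let m ≥ 1, let U ⊆ ℂ^m × ℝ be open, and let f : U → ℝ be a continuous function. Let V ⊆ ℂ^m × ℂ be an open neighborhood of the origin and let h : V → ℂ be holomorphic such that every zero of h lies in the graph of f, i.e. for all (z,w) ∈ V with h(z,w) = 0 one has (z, Re w) ∈ U and Im w = f(z, Re w). Then there exists ε > 0 such that {0} × {w ∈ ℂ : |w| < ε} ⊆ V and for every w ∈ ℂ with |w| < ε and h(0,w) = 0 one has w = 0. (In other words, the zero set of h is w-regular at the origin: its intersection with the vertical disc {z = 0, |w| < ε} is at most {0}.) -/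
open Set

/-- First step in the proof of Lemma 3.5: the zero set of `h` is `w`-regular at the
origin, i.e. its intersection with a small vertical disc `{z = 0, |w| < ε}` is
contained in `{0}`. -/
theorem zero_set_in_graph_w_regular
    (m : ℕ) (hm : 1 ≤ m)
    (U : Set ((Fin m → ℂ) × ℝ)) (hUopen : IsOpen U)
    (f : (Fin m → ℂ) × ℝ → ℝ) (hf : ContinuousOn f U)
    (V : Set ((Fin m → ℂ) × ℂ)) (hVopen : IsOpen V)
    (h0V : (0 : (Fin m → ℂ) × ℂ) ∈ V)
    (h : (Fin m → ℂ) × ℂ → ℂ) (hh : DifferentiableOn ℂ h V)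
    (hgraph : ∀ p ∈ V, h p = 0 → (p.1, p.2.re) ∈ U ∧ p.2.im = f (p.1, p.2.re)) :
    ∃ ε : ℝ, 0 < ε ∧
      ({(0 : Fin m → ℂ)} ×ˢ {w : ℂ | ‖w‖ < ε}) ⊆ V ∧
      ∀ w : ℂ, ‖w‖ < ε → h (0, w) = 0 → w = 0 := by
  obtain ⟨r, hr, hrV⟩ := Metric.isOpen_iff.1 hVopen _ h0V
  have hsub : ∀ ε ≤ r, ({(0 : Fin m → ℂ)} ×ˢ {w : ℂ | ‖w‖ < ε}) ⊆ V := by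
    intro ε hε p hp
    obtain ⟨hp1, hp2⟩ := hp
    apply hrV
    have : dist p (0 : (Fin m → ℂ) × ℂ) < r := by
      rw [Prod.dist_eq]
      simp only [mem_singleton_iff] at hp1
      simp only [mem_setOf_eq] at hp2
      have h2 : dist p.2 (0:ℂ) < r := by
        rw [Complex.dist_eq, sub_zero]; exact lt_of_lt_of_le hp2 hε
      have h1 : dist p.1 (0 : Fin m → ℂ) = 0 := by simp [hp1]
      simp only [Prod.fst_zero, Prod.snd_zero] at *
      rw [Complex.dist_eq, sub_zero] at h2
      simp [max_lt_iff, h1, h2, hr]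
    simpa using this
  -- g is analytic at 0
  have hball : Metric.ball ((0 : Fin m → ℂ), (0:ℂ)) r ⊆ V := by exact hrV
  have hgdiff : DifferentiableOn ℂ (fun w : ℂ => h (0, w)) (Metric.ball (0:ℂ) r) := by
    apply hh.comp ((differentiable_const _).prodMk differentiable_id).differentiableOn
    intro w hw
    apply hball
    simp only [Metric.mem_ball, Prod.dist_eq] at *
    simpa [hr] using hw
  have hgan : AnalyticAt ℂ (fun w : ℂ => h (0, w)) 0 := by
    apply hgdiff.analyticAt
    exact Metric.ball_mem_nhds _ hr
  rcases hgan.eventually_eq_zero_or_eventually_ne_zero with hz | hnz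
  · -- g ≡ 0 near 0: contradiction with graph
    exfalso
    obtain ⟨δ, hδ, hδz⟩ := Metric.eventually_nhds_iff_ball.1 hz
    set δ' := min δ r with hδ'
    have hδ'pos : 0 < δ' := lt_min hδ hr
    have key : ∀ t : ℝ, |t| < δ' → t = f (0, 0) := by
      intro t ht
      have habs : ‖(t * Complex.I : ℂ)‖ < δ' := by
        simpa using ht
      have hmem : ((0 : Fin m → ℂ), (t : ℂ) * Complex.I) ∈ V := by
        apply hsub δ' (min_le_right _ _)
        exact ⟨rfl, habs⟩
      have hzero : h (0, (t : ℂ) * Complex.I) = 0 := by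
        apply hδz
        simp only [Metric.mem_ball, Complex.dist_eq, sub_zero]
        exact lt_of_lt_of_le habs (min_le_left _ _)
      have := (hgraph _ hmem hzero).2
      simpa using this
    have h1 := key (δ'/2) (by rw [abs_of_pos (by linarith)]; linarith)
    have h2 := key (-(δ'/2)) (by rw [abs_neg, abs_of_pos (by linarith)]; linarith)
    linarith
  · -- isolated zero
    rw [eventually_nhdsWithin_iff] at hnz
    obtain ⟨δ, hδ, hδz⟩ := Metric.eventually_nhds_iff_ball.1 hnz
    refine ⟨min δ r, lt_min hδ hr, hsub _ (min_le_right _ _), ?_⟩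
    intro w hw hw0
    by_contra hwne
    refine hδz w ?_ hwne hw0
    simp only [Metric.mem_ball, Complex.dist_eq, sub_zero]
    exact lt_of_lt_of_le hw (min_le_left _ _)
end

section
/- Let m ≥ 1, let D ⊆ ℂ^m be a nonempty open connected set, and let τ₁, τ₂ : D → ℂ be holomorphic. Let f : ℂ^m × ℝ → ℝ be any function such that for j = 1, 2 and all z ∈ D one has Im τⱼ(z) = f(z, Re τⱼ(z)) (i.e. the graphs of τ₁ and τ₂ are both contained in the graph of f over ℂ^m × ℝ). If there exists z₀ ∈ D with τ₁(z₀) = τ₂(z₀), then τ₁ = τ₂ on all of D. -/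
open Set

/-- Final step in the proof of Lemma 3.5: two holomorphic functions on a connected open
set whose graphs are both contained in the graph of a real function `f` over `ℂ^m × ℝ`
and which agree at one point agree everywhere. -/
theorem holomorphic_sections_of_graph_coincide
    (m : ℕ) (hm : 1 ≤ m)
    (D : Set (Fin m → ℂ)) (hDopen : IsOpen D) (hDconn : IsConnected D)
    (τ₁ τ₂ : (Fin m → ℂ) → ℂ)
    (hτ₁ : DifferentiableOn ℂ τ₁ D) (hτ₂ : DifferentiableOn ℂ τ₂ D)
    (f : (Fin m → ℂ) × ℝ → ℝ)
    (hf₁ : ∀ z ∈ D, (τ₁ z).im = f (z, (τ₁ z).re))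
    (hf₂ : ∀ z ∈ D, (τ₂ z).im = f (z, (τ₂ z).re))
    (z₀ : Fin m → ℂ) (hz₀ : z₀ ∈ D) (heq : τ₁ z₀ = τ₂ z₀) :
    Set.EqOn τ₁ τ₂ D := by
  set g : (Fin m → ℂ) → ℂ := fun z => τ₁ z - τ₂ z with hgdef
  have hgd : DifferentiableOn ℂ g D := hτ₁.sub hτ₂
  -- key property: if the real part of g vanishes at a point of D, then g vanishes there
  have key : ∀ z ∈ D, (g z).re = 0 → g z = 0 := by
    intro z hz hre
    have hre' : (τ₁ z).re = (τ₂ z).re := by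
      have : (τ₁ z).re - (τ₂ z).re = 0 := by
        simpa [hgdef, Complex.sub_re] using hre
      linarith
    have him : (τ₁ z).im = (τ₂ z).im := by
      rw [hf₁ z hz, hf₂ z hz, hre']
    have : τ₁ z = τ₂ z := Complex.ext hre' him
    simp [hgdef, this]
  -- the zero set of g inside D is open
  have hopen : IsOpen {z | z ∈ D ∧ g z = 0} := by
    refine Metric.isOpen_iff.mpr ?_
    rintro a ⟨haD, hga⟩
    obtain ⟨r, hr0, hrD⟩ := Metric.isOpen_iff.mp hDopen a haD
    refine ⟨r, hr0, ?_⟩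
    intro b hb
    refine ⟨hrD hb, ?_⟩
    by_cases hba : b = a
    · simpa [hba] using hga
    · set v : Fin m → ℂ := b - a with hv
      have hvne : v ≠ 0 := sub_ne_zero.mpr hba
      have hvnorm : (0:ℝ) < ‖v‖ := norm_pos_iff.mpr hvne
      set R : ℝ := r / ‖v‖ with hR
      have hR0 : 0 < R := div_pos hr0 hvnorm
      set φ : ℂ → (Fin m → ℂ) := fun t => a + t • v with hφ
      have hφmaps : ∀ t ∈ Metric.ball (0:ℂ) R, φ t ∈ Metric.ball a r := by
        intro t ht
        have htn : ‖t‖ < R := by simpa [Metric.mem_ball, dist_eq_norm] using ht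
        have hlt : ‖t • v‖ < r := by
          rw [norm_smul]
          calc ‖t‖ * ‖v‖ < R * ‖v‖ := mul_lt_mul_of_pos_right htn hvnorm
            _ = r := by rw [hR]; exact div_mul_cancel₀ r hvnorm.ne'
        have : ‖φ t - a‖ < r := by simpa [hφ] using hlt
        simpa [Metric.mem_ball, dist_eq_norm] using this
      have hφD : ∀ t ∈ Metric.ball (0:ℂ) R, φ t ∈ D := fun t ht => hrD (hφmaps t ht)
      set h : ℂ → ℂ := fun t => g (φ t) with hh
      have hφdiff : Differentiable ℂ φ := by
        simpa [hφ] using (differentiable_id.smul_const v).const_add a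
      have hhd : DifferentiableOn ℂ h (Metric.ball (0:ℂ) R) :=
        hgd.comp hφdiff.differentiableOn hφD
      have hana : AnalyticOnNhd ℂ h (Metric.ball (0:ℂ) R) :=
        hhd.analyticOnNhd Metric.isOpen_ball
      have h0mem : (0:ℂ) ∈ Metric.ball (0:ℂ) R := Metric.mem_ball_self hR0
      have h0 : h 0 = 0 := by simp [hh, hφ, hga]
      rcases (hana 0 h0mem).eventually_constant_or_nhds_le_map_nhds with hconst | hmap
      · -- h vanishes near 0, hence on the whole ball by the identity theorem
        have hconst' : h =ᶠ[nhds 0] fun _ => (0:ℂ) := by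
          simp only [h0] at hconst; exact hconst
        have heqon : Set.EqOn h (fun _ => (0:ℂ)) (Metric.ball (0:ℂ) R) :=
          hana.eqOn_of_preconnected_of_eventuallyEq
            (analyticOnNhd_const) (convex_ball (0:ℂ) R).isPreconnected h0mem hconst'
        have h1mem : (1:ℂ) ∈ Metric.ball (0:ℂ) R := by
          have hdb : ‖v‖ < r := by
            have := hb
            simpa [Metric.mem_ball, dist_eq_norm, hv] using this
          have : (1:ℝ) < R := (one_lt_div hvnorm).mpr hdb
          simpa [Metric.mem_ball, dist_eq_norm] using this
        have := heqon h1mem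
        simpa [hh, hφ, hv] using this
      · -- open mapping would force g to take nonzero purely imaginary values
        exfalso
        rw [h0] at hmap
        have himg : h '' Metric.ball (0:ℂ) R ∈ Filter.map h (nhds 0) :=
          Filter.image_mem_map (Metric.ball_mem_nhds 0 hR0)
        have hnhds : h '' Metric.ball (0:ℂ) R ∈ nhds (0:ℂ) := hmap himg
        obtain ⟨ε, hε, hball⟩ := Metric.mem_nhds_iff.mp hnhds
        set w : ℂ := Complex.I * (ε / 2 : ℝ) with hw
        have hnw : ‖w‖ = ε / 2 := by
          simp [hw, abs_of_pos hε]
        have hwmem : w ∈ Metric.ball (0:ℂ) ε := by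
          rw [Metric.mem_ball, dist_zero_right, hnw]
          linarith
        obtain ⟨t, ht, hwt⟩ := hball hwmem
        have hre : (h t).re = 0 := by rw [hwt, hw]; simp
        have : h t = 0 := key (φ t) (hφD t ht) hre
        rw [hwt] at this
        have : (ε / 2 : ℝ) = 0 := by
          have := congrArg Complex.im this
          simpa [hw] using this
        linarith
  -- the nonzero set of g inside D is also open
  have hVopen : IsOpen {z | z ∈ D ∧ g z ≠ 0} := by
    have := hgd.continuousOn.isOpen_inter_preimage hDopen
      (isOpen_compl_singleton (x := (0:ℂ)))
    convert this using 1
    ext z; simp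
  -- conclude by connectedness
  intro z hz
  by_contra hne
  have hnz : g z ≠ 0 := sub_ne_zero.mpr hne
  have hnonempty :
      (D ∩ ({z | z ∈ D ∧ g z = 0} ∩ {z | z ∈ D ∧ g z ≠ 0})).Nonempty := by
    refine hDconn.isPreconnected _ _ hopen hVopen ?_ ?_ ?_
    · intro x hx
      by_cases hgx : g x = 0
      · exact Or.inl ⟨hx, hgx⟩
      · exact Or.inr ⟨hx, hgx⟩
    · exact ⟨z₀, hz₀, hz₀, sub_eq_zero.mpr heq⟩
    · exact ⟨z, hz, hz, hnz⟩
  obtain ⟨x, _, ⟨_, hx0⟩, ⟨_, hx1⟩⟩ := hnonempty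
  exact hx1 hx0
end

section
/- Let F be a finite-dimensional real normed vector space, let K ⊆ F be a compact convex set, and let W ⊆ F be a linear subspace. Let q̄ be a point of the interior of K and let (q_j) be a sequence in F converging to q̄. Then the sections K ∩ (q_j + W) converge to K ∩ (q̄ + W) in the Hausdorff distance, i.e. hausdorffDist(K ∩ (q_j + W), K ∩ (q̄ + W)) → 0 as j → ∞. -/
open Pointwise

/-- Slices of a compact convex body by translated affine subspaces through points
converging to an interior point converge in the Hausdorff distance. -/
theorem hausdorff_convergence_of_convex_sections
    {F : Type*} [NormedAddCommGroup F] [NormedSpace ℝ F] [FiniteDimensional ℝ F]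
    (K : Set F) (hKcomp : IsCompact K) (hKconv : Convex ℝ K)
    (W : Submodule ℝ F)
    (qbar : F) (hqbar : qbar ∈ interior K)
    (q : ℕ → F) (hq : Filter.Tendsto q Filter.atTop (nhds qbar)) :
    Filter.Tendsto
      (fun j => Metric.hausdorffDist (K ∩ (q j +ᵥ (W : Set F))) (K ∩ (qbar +ᵥ (W : Set F))))
      Filter.atTop (nhds 0) := by
  obtain ⟨r, hr, hball⟩ := Metric.isOpen_iff.mp isOpen_interior qbar hqbar
  have hball' : Metric.ball qbar r ⊆ K := hball.trans interior_subset
  have hqbarK : qbar ∈ K := interior_subset hqbar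
  obtain ⟨D, hD⟩ := Metric.isBounded_iff.mp hKcomp.isBounded
  have hD0 : 0 ≤ D := le_trans dist_nonneg (hD hqbarK hqbarK)
  have hv : Filter.Tendsto (fun j => ‖q j - qbar‖) Filter.atTop (nhds 0) :=
    tendsto_iff_norm_sub_tendsto_zero.mp hq
  rw [Metric.tendsto_nhds]
  intro ε hε
  set t : ℝ := min 1 ((ε / 2) / (D + r + 1)) with ht_def
  have ht0 : 0 < t := lt_min one_pos (by positivity)
  have ht1 : t ≤ 1 := min_le_left _ _
  have htb : t * (D + r) ≤ ε / 2 := by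
    have h1 : t ≤ (ε / 2) / (D + r + 1) := min_le_right _ _
    have h2 : (0:ℝ) < D + r + 1 := by linarith
    rw [le_div_iff₀ h2] at h1
    nlinarith
  have hev : ∀ᶠ j in Filter.atTop, ‖q j - qbar‖ < t * r :=
    hv.eventually (eventually_lt_nhds (by positivity))
  filter_upwards [hev] with j hj
  set v : F := q j - qbar with hv_def
  have hqjK : q j ∈ K := by
    apply hball'
    rw [Metric.mem_ball, dist_eq_norm]
    calc ‖q j - qbar‖ < t * r := hj
      _ ≤ 1 * r := by nlinarith
      _ = r := one_mul r
  -- direction A : points of the qbar-slice are close to the q j-slice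
  have dirA : ∀ y ∈ K ∩ (qbar +ᵥ (W : Set F)),
      Metric.infDist y (K ∩ (q j +ᵥ (W : Set F))) ≤ ε / 2 := by
    rintro y ⟨hyK, hyW⟩
    obtain ⟨w, hwW, hwy⟩ := hyW
    -- y = qbar + w, w ∈ W
    set z : F := y + v + t • (qbar - y) with hz_def
    have hzK : z ∈ K := by
      have hmem : qbar + t⁻¹ • v ∈ K := by
        apply hball'
        rw [Metric.mem_ball, dist_eq_norm]
        have : ‖(qbar + t⁻¹ • v) - qbar‖ = t⁻¹ * ‖v‖ := by
          rw [add_sub_cancel_left, norm_smul, Real.norm_eq_abs, abs_of_pos (by positivity)]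
        rw [this, inv_mul_lt_iff₀ ht0]
        exact hj
      have hzeq : z = (1 - t) • y + t • (qbar + t⁻¹ • v) := by
        rw [smul_add, smul_smul, mul_inv_cancel₀ ht0.ne', one_smul, hz_def]
        module
      rw [hzeq]
      exact hKconv hyK hmem (by linarith) ht0.le (by ring)
    have hzW : z ∈ q j +ᵥ (W : Set F) := by
      refine ⟨(1 - t) • w, W.smul_mem _ hwW, ?_⟩
      have : y = qbar + w := hwy.symm
      simp only [vadd_eq_add, hz_def, hv_def, this]
      module
    refine le_trans (Metric.infDist_le_dist_of_mem ⟨hzK, hzW⟩) ?_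
    have hdy : dist y z = ‖t • (y - qbar) - v‖ := by
      rw [dist_eq_norm, hz_def]
      congr 1
      module
    rw [hdy]
    calc ‖t • (y - qbar) - v‖ ≤ ‖t • (y - qbar)‖ + ‖v‖ := norm_sub_le _ _
      _ = t * ‖y - qbar‖ + ‖v‖ := by
          rw [norm_smul, Real.norm_eq_abs, abs_of_pos ht0]
      _ ≤ t * D + t * r := by
          have h1 : ‖y - qbar‖ ≤ D := by
            rw [← dist_eq_norm]; exact hD hyK hqbarK
          have := hj.le
          nlinarith
      _ = t * (D + r) := by ring
      _ ≤ ε / 2 := htb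
  -- direction B : points of the q j-slice are close to the qbar-slice
  have dirB : ∀ x ∈ K ∩ (q j +ᵥ (W : Set F)),
      Metric.infDist x (K ∩ (qbar +ᵥ (W : Set F))) ≤ ε / 2 := by
    rintro x ⟨hxK, hxW⟩
    obtain ⟨w, hwW, hwx⟩ := hxW
    set z : F := x - v + t • (q j - x) with hz_def
    have hzK : z ∈ K := by
      have hmem : qbar + ((1 - t) * t⁻¹) • (-v) ∈ K := by
        apply hball'
        rw [Metric.mem_ball, dist_eq_norm]
        have heq : ‖(qbar + ((1 - t) * t⁻¹) • (-v)) - qbar‖ = ((1 - t) * t⁻¹) * ‖v‖ := by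
          rw [add_sub_cancel_left, norm_smul, Real.norm_eq_abs, norm_neg,
            abs_of_nonneg (mul_nonneg (by linarith) (inv_pos.mpr ht0).le)]
        rw [heq]
        calc (1 - t) * t⁻¹ * ‖v‖ ≤ 1 * t⁻¹ * ‖v‖ := by
              have : (0:ℝ) ≤ t⁻¹ * ‖v‖ := by positivity
              nlinarith
          _ = t⁻¹ * ‖v‖ := by ring
          _ < r := by rw [inv_mul_lt_iff₀ ht0]; exact hj
      have hzeq : z = (1 - t) • x + t • (qbar + ((1 - t) * t⁻¹) • (-v)) := by
        rw [smul_add, smul_smul, mul_comm t ((1 - t) * t⁻¹), mul_assoc,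
          inv_mul_cancel₀ ht0.ne', mul_one, hz_def, hv_def]
        module
      rw [hzeq]
      exact hKconv hxK hmem (by linarith) ht0.le (by ring)
    have hzW : z ∈ qbar +ᵥ (W : Set F) := by
      refine ⟨(1 - t) • w, W.smul_mem _ hwW, ?_⟩
      have : x = q j + w := hwx.symm
      simp only [vadd_eq_add, hz_def, hv_def, this]
      module
    refine le_trans (Metric.infDist_le_dist_of_mem ⟨hzK, hzW⟩) ?_
    have hdx : dist x z = ‖v - t • (q j - x)‖ := by
      rw [dist_eq_norm, hz_def]
      congr 1
      module
    rw [hdx]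
    calc ‖v - t • (q j - x)‖ ≤ ‖v‖ + ‖t • (q j - x)‖ := norm_sub_le _ _
      _ = ‖v‖ + t * ‖q j - x‖ := by
          rw [norm_smul, Real.norm_eq_abs, abs_of_pos ht0]
      _ ≤ t * r + t * D := by
          have h1 : ‖q j - x‖ ≤ D := by
            rw [← dist_eq_norm]; exact hD hqjK hxK
          have := hj.le
          nlinarith
      _ = t * (D + r) := by ring
      _ ≤ ε / 2 := htb
  have hle : Metric.hausdorffDist (K ∩ (q j +ᵥ (W : Set F))) (K ∩ (qbar +ᵥ (W : Set F)))
      ≤ ε / 2 := Metric.hausdorffDist_le_of_infDist (by positivity) dirB dirA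
  rw [Real.dist_eq, sub_zero, abs_of_nonneg Metric.hausdorffDist_nonneg]
  linarith
end

section
/- Let m ≥ 1 and let Ω ⊆ ℂ^m × ℝ be a bounded open convex set whose closure is strictly convex. Let g : frontier Ω → ℝ be a continuous function, let a ∈ ℂ^m be nonzero, and let W = {(λa, t) : λ ∈ ℂ, t ∈ ℝ} ⊆ ℂ^m × ℝ. For q ∈ Ω define S_q = {(z, u + i·g(z,u)) ∈ ℂ^m × ℂ : (z,u) ∈ frontier Ω ∩ (q + W)}, the portion of the graph of g lying over the slice of the boundary of Ω by the affine subspace q + W. Then for every sequence (q_j) of points of Ω converging to a point q̄ ∈ Ω, the sets S_{q_j} converge to S_{q̄} in the Hausdorff distance, i.e. hausdorffDist(S_{q_j}, S_{q̄}) → 0 as j → ∞. -/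
open Pointwise
open Filter Metric Bornology

section ExitAux

variable {E : Type*} [NormedAddCommGroup E] [NormedSpace ℝ E]

/-- The exit parameter of the ray `s ↦ p + s • w` from the closure of `Ω`. -/
noncomputable def exitParam (Ω : Set E) (p w : E) : ℝ :=
  sSup {s : ℝ | 0 ≤ s ∧ p + s • w ∈ closure Ω}

lemma exit_bddAbove {Ω : Set E} (hΩbdd : IsBounded Ω) {w : E} (hw : w ≠ 0) (p : E) :
    BddAbove {s : ℝ | 0 ≤ s ∧ p + s • w ∈ closure Ω} := by
  obtain ⟨R, hR⟩ := hΩbdd.closure.subset_closedBall 0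
  refine ⟨(R + ‖p‖) / ‖w‖, fun s hs => ?_⟩
  have h1 : ‖p + s • w‖ ≤ R := by
    have := hR hs.2
    rwa [Metric.mem_closedBall, dist_zero_right] at this
  have h2 : s * ‖w‖ ≤ R + ‖p‖ := by
    have : ‖s • w‖ ≤ ‖p + s • w‖ + ‖p‖ := by
      have := norm_sub_le (p + s • w) p
      simpa using this
    rw [norm_smul, Real.norm_eq_abs, abs_of_nonneg hs.1] at this
    linarith
  rw [le_div_iff₀ (norm_pos_iff.2 hw)]
  exact h2

lemma exit_mem {Ω : Set E} (hΩbdd : IsBounded Ω) {p w : E} (hp : p ∈ closure Ω) (hw : w ≠ 0) :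
    0 ≤ exitParam Ω p w ∧ p + (exitParam Ω p w) • w ∈ closure Ω := by
  have hne : ({s : ℝ | 0 ≤ s ∧ p + s • w ∈ closure Ω}).Nonempty := ⟨0, le_refl 0, by simpa⟩
  have hcl : IsClosed {s : ℝ | 0 ≤ s ∧ p + s • w ∈ closure Ω} := by
    have : {s : ℝ | 0 ≤ s ∧ p + s • w ∈ closure Ω}
        = Set.Ici (0:ℝ) ∩ (fun s : ℝ => p + s • w) ⁻¹' closure Ω := by
      ext s; simp [Set.mem_Ici]
    rw [this]
    exact isClosed_Ici.inter (isClosed_closure.preimage (by continuity))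
  exact hcl.csSup_mem hne (exit_bddAbove hΩbdd hw p)

lemma exit_interval {Ω : Set E} (hΩbdd : IsBounded Ω) (hΩconv : Convex ℝ Ω) {p w : E}
    (hp : p ∈ closure Ω) (hw : w ≠ 0) {s : ℝ} (h0 : 0 ≤ s) (hs : s ≤ exitParam Ω p w) :
    p + s • w ∈ closure Ω := by
  set A := {s : ℝ | 0 ≤ s ∧ p + s • w ∈ closure Ω} with hA
  have hconvA : Convex ℝ A := by
    intro s1 hs1 s2 hs2 α β hα hβ hαβ
    refine ⟨add_nonneg (mul_nonneg hα hs1.1) (mul_nonneg hβ hs2.1), ?_⟩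
    have hmem := (hΩconv.closure) hs1.2 hs2.2 hα hβ hαβ
    have heq : α • (p + s1 • w) + β • (p + s2 • w) = p + (α • s1 + β • s2) • w := by
      have hp' : p = α • p + β • p := by
        rw [← add_smul, hαβ, one_smul]
      rw [smul_add, smul_add, smul_smul, smul_smul, add_smul]
      nth_rewrite 3 [hp']
      simp only [smul_eq_mul]
      abel
    rwa [heq] at hmem
  have h0A : (0:ℝ) ∈ A := ⟨le_refl 0, by simpa⟩
  have heA : exitParam Ω p w ∈ A := exit_mem hΩbdd hp hw
  exact (hconvA.ordConnected.out h0A heA ⟨h0, hs⟩).2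

lemma exit_frontier {Ω : Set E} (hΩopen : IsOpen Ω) (hΩbdd : IsBounded Ω) {p w : E}
    (hp : p ∈ closure Ω) (hw : w ≠ 0) :
    p + (exitParam Ω p w) • w ∈ frontier Ω := by
  obtain ⟨he0, hecl⟩ := exit_mem hΩbdd hp hw
  have hnot : p + (exitParam Ω p w) • w ∉ Ω := by
    intro hmem
    have hco : Continuous (fun s : ℝ => p + s • w) := by continuity
    have : ∀ᶠ s in nhds (exitParam Ω p w), p + s • w ∈ Ω :=
      (hco.continuousAt).eventually_mem (hΩopen.mem_nhds hmem)
    obtain ⟨s, hsgt, hsΩ⟩ := this.exists_gt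
    have : s ≤ exitParam Ω p w :=
      le_csSup (exit_bddAbove hΩbdd hw p) ⟨le_of_lt (lt_of_le_of_lt he0 hsgt), subset_closure hsΩ⟩
    exact absurd this (not_le.2 hsgt)
  rw [frontier, hΩopen.interior_eq]
  exact ⟨hecl, hnot⟩

lemma exit_lt_mem {Ω : Set E} (hΩopen : IsOpen Ω) (hΩbdd : IsBounded Ω) (hΩconv : Convex ℝ Ω)
    {p w : E} (hp : p ∈ Ω) (hw : w ≠ 0) {s : ℝ} (h0 : 0 ≤ s) (hs : s < exitParam Ω p w) :
    p + s • w ∈ Ω := by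
  rcases eq_or_lt_of_le h0 with h | h
  · simpa [← h]
  set e := exitParam Ω p w with he
  have hepos : 0 < e := lt_trans h hs
  have hx : p + e • w ∈ closure Ω := (exit_mem hΩbdd (subset_closure hp) hw).2
  have hαpos : (0:ℝ) < 1 - s / e := by
    have : s / e < 1 := (div_lt_one hepos).2 hs
    linarith
  have hβ : (0:ℝ) ≤ s / e := div_nonneg h0 hepos.le
  have hcomb := hΩconv.combo_interior_closure_mem_interior
    (by rwa [hΩopen.interior_eq] : p ∈ interior Ω) hx hαpos hβ (by ring)
  have heq : (1 - s / e) • p + (s / e) • (p + e • w) = p + s • w := by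
    rw [smul_add, smul_smul, div_mul_cancel₀ _ hepos.ne', ← add_assoc, ← add_smul,
      sub_add_cancel, one_smul]
  rw [heq, hΩopen.interior_eq] at hcomb
  exact hcomb

lemma exit_eq_one {Ω : Set E} (hΩopen : IsOpen Ω) (hΩbdd : IsBounded Ω) (hΩconv : Convex ℝ Ω)
    {p w : E} (hp : p ∈ Ω) (hw : w ≠ 0) (hfr : p + w ∈ frontier Ω) :
    exitParam Ω p w = 1 := by
  have h1 : (1:ℝ) ≤ exitParam Ω p w := by
    apply le_csSup (exit_bddAbove hΩbdd hw p)
    exact ⟨zero_le_one, by simpa using frontier_subset_closure hfr⟩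
  rcases eq_or_lt_of_le h1 with h | h
  · exact h.symm
  · exfalso
    have := exit_lt_mem hΩopen hΩbdd hΩconv hp hw zero_le_one h
    rw [one_smul] at this
    rw [frontier, hΩopen.interior_eq] at hfr
    exact hfr.2 this

lemma exit_tendsto {Ω : Set E} (hΩopen : IsOpen Ω) (hΩbdd : IsBounded Ω) (hΩconv : Convex ℝ Ω)
    {p : ℕ → E} {pbar w : E} (hpm : ∀ n, p n ∈ Ω) (hpbar : pbar ∈ Ω) (hw : w ≠ 0)
    (hp : Tendsto p atTop (nhds pbar)) :
    Tendsto (fun n => exitParam Ω (p n) w) atTop (nhds (exitParam Ω pbar w)) := by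
  rw [tendsto_order]
  constructor
  · intro c hc
    rcases lt_or_ge c 0 with hc0 | hc0
    · filter_upwards with n
      exact lt_of_lt_of_le hc0 (exit_mem hΩbdd (subset_closure (hpm n)) hw).1
    · set c' := (c + exitParam Ω pbar w) / 2 with hc'
      have hcc' : c < c' := by rw [hc']; linarith
      have hc'e : c' < exitParam Ω pbar w := by rw [hc']; linarith
      have hc'0 : 0 ≤ c' := le_trans hc0 hcc'.le
      have hmem : pbar + c' • w ∈ Ω := exit_lt_mem hΩopen hΩbdd hΩconv hpbar hw hc'0 hc'e
      have htd : Tendsto (fun n => p n + c' • w) atTop (nhds (pbar + c' • w)) :=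
        hp.add tendsto_const_nhds
      filter_upwards [htd.eventually_mem (hΩopen.mem_nhds hmem)] with n hn
      exact lt_of_lt_of_le hcc'
        (le_csSup (exit_bddAbove hΩbdd hw (p n)) ⟨hc'0, subset_closure hn⟩)
  · intro c hc
    set c' := (exitParam Ω pbar w + c) / 2 with hc'
    have hec' : exitParam Ω pbar w < c' := by rw [hc']; linarith
    have hc'c : c' < c := by rw [hc']; linarith
    have hc'0 : 0 ≤ c' := le_trans (exit_mem hΩbdd (subset_closure hpbar) hw).1 hec'.le
    have hnot : pbar + c' • w ∉ closure Ω := by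
      intro hmem
      exact absurd (le_csSup (exit_bddAbove hΩbdd hw pbar) ⟨hc'0, hmem⟩) (not_le.2 hec')
    have htd : Tendsto (fun n => p n + c' • w) atTop (nhds (pbar + c' • w)) :=
      hp.add tendsto_const_nhds
    filter_upwards [htd.eventually_mem (isClosed_closure.isOpen_compl.mem_nhds hnot)] with n hn
    by_contra hcon
    push_neg at hcon
    exact hn (exit_interval hΩbdd hΩconv (subset_closure (hpm n)) hw hc'0 (le_trans hc'c.le hcon))

end ExitAux


/-- Continuity step of Proposition 3.4: the portions `S_q` of the graph of `g` lying
over the slices of the boundary of the strictly convex body `Ω` by the translated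
subspaces `q + W` converge in the Hausdorff distance as `q_j → q̄` in `Ω`. -/
theorem hausdorff_convergence_of_graph_slices
    (m : ℕ) (hm : 1 ≤ m)
    (Ω : Set ((Fin m → ℂ) × ℝ)) (hΩopen : IsOpen Ω)
    (hΩbdd : Bornology.IsBounded Ω) (hΩconv : Convex ℝ Ω)
    (hΩstrict : StrictConvex ℝ (closure Ω))
    (g : (Fin m → ℂ) × ℝ → ℝ) (hg : ContinuousOn g (frontier Ω))
    (a : Fin m → ℂ) (ha : a ≠ 0)
    (W : Set ((Fin m → ℂ) × ℝ))
    (hW : W = {p : (Fin m → ℂ) × ℝ | ∃ (l : ℂ) (t : ℝ), p = (l • a, t)})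
    (S : (Fin m → ℂ) × ℝ → Set ((Fin m → ℂ) × ℂ))
    (hS : ∀ q : (Fin m → ℂ) × ℝ,
      S q = (fun p : (Fin m → ℂ) × ℝ => (p.1, (p.2 : ℂ) + (g p : ℂ) * Complex.I)) ''
        (frontier Ω ∩ (q +ᵥ W)))
    (q : ℕ → (Fin m → ℂ) × ℝ) (hqmem : ∀ j, q j ∈ Ω)
    (qbar : (Fin m → ℂ) × ℝ) (hqbarmem : qbar ∈ Ω)
    (hq : Filter.Tendsto q Filter.atTop (nhds qbar)) :
    Filter.Tendsto (fun j => Metric.hausdorffDist (S (q j)) (S qbar))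
      Filter.atTop (nhds 0) := by
  classical
  set φ : (Fin m → ℂ) × ℝ → (Fin m → ℂ) × ℂ :=
    fun p => (p.1, (p.2 : ℂ) + (g p : ℂ) * Complex.I) with hφdef
  set K := frontier Ω with hKdef
  have hKcl : IsClosed K := isClosed_frontier
  have hKcomp : IsCompact K :=
    Metric.isCompact_of_isClosed_isBounded hKcl (hΩbdd.closure.subset frontier_subset_closure)
  have hφcont : ContinuousOn φ K := by
    apply ContinuousOn.prodMk continuous_fst.continuousOn
    exact ((Complex.continuous_ofReal.comp continuous_snd).continuousOn).add
      ((Complex.continuous_ofReal.comp_continuousOn hg).mul continuousOn_const)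
  have hWzero : (0 : (Fin m → ℂ) × ℝ) ∈ W := by rw [hW]; exact ⟨0, 0, by simp [Prod.zero_eq_mk]⟩
  have hWadd : ∀ x ∈ W, ∀ y ∈ W, x + y ∈ W := by
    rw [hW]; rintro x ⟨l1, t1, rfl⟩ y ⟨l2, t2, rfl⟩
    exact ⟨l1 + l2, t1 + t2, by simp [add_smul]⟩
  have hWsmul : ∀ (c : ℝ), ∀ x ∈ W, c • x ∈ W := by
    rw [hW]; rintro c x ⟨l, t, rfl⟩
    refine ⟨(c : ℂ) * l, c * t, ?_⟩
    have : c • (l • a) = ((c : ℂ) * l) • a := by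
      rw [← smul_assoc, Complex.real_smul]
    simp [Prod.smul_mk, this]
  let Wsub : Submodule ℝ ((Fin m → ℂ) × ℝ) :=
    { carrier := W
      add_mem' := fun hx hy => hWadd _ hx _ hy
      zero_mem' := hWzero
      smul_mem' := fun c x hx => hWsmul c x hx }
  have hWclosed : IsClosed W := Wsub.closed_of_finiteDimensional
  have hvadd : ∀ (v x : (Fin m → ℂ) × ℝ), x ∈ v +ᵥ W ↔ x - v ∈ W := by
    intro v x
    rw [Set.mem_vadd_set_iff_neg_vadd_mem]
    simp [vadd_eq_add, neg_add_eq_sub]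
  have hvaddclosed : IsClosed (qbar +ᵥ W) := by
    have h : qbar +ᵥ W = (fun x => x - qbar) ⁻¹' W := by
      ext x; exact hvadd qbar x
    rw [h]
    exact hWclosed.preimage (continuous_id.sub continuous_const)
  have hfr_not_mem : ∀ x ∈ frontier Ω, x ∉ Ω := by
    intro x hx
    rw [frontier, hΩopen.interior_eq] at hx
    exact hx.2
  have hφseq : ∀ (z : ℕ → (Fin m → ℂ) × ℝ) (zbar : (Fin m → ℂ) × ℝ),
      (∀ n, z n ∈ K) → zbar ∈ K → Tendsto z atTop (nhds zbar) →
      Tendsto (fun n => φ (z n)) atTop (nhds (φ zbar)) := by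
    intro z zbar hzK hzbarK hz
    exact (hφcont zbar hzbarK).tendsto.comp
      (tendsto_nhdsWithin_of_tendsto_nhds_of_eventually_within z hz
        (Filter.Eventually.of_forall hzK))
  have key : ∀ ε > 0, ∀ᶠ j in atTop, hausdorffDist (S (q j)) (S qbar) < ε := by
    intro ε hε
    by_contra hcon
    rw [Filter.not_eventually] at hcon
    obtain ⟨ψ, hψmono, hψ⟩ := Filter.extraction_of_frequently_atTop hcon
    have hdisj : ∀ k, (∃ x ∈ S (q (ψ k)), ε/2 < infDist x (S qbar)) ∨
        (∃ y ∈ S qbar, ε/2 < infDist y (S (q (ψ k)))) := by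
      intro k
      by_contra hno
      push_neg at hno
      obtain ⟨h1, h2⟩ := hno
      have : hausdorffDist (S (q (ψ k))) (S qbar) ≤ ε/2 :=
        hausdorffDist_le_of_infDist (by linarith) (fun x hx => h1 x hx) (fun y hy => h2 y hy)
      exact hψ k (lt_of_le_of_lt this (by linarith))
    rcases Classical.em (∃ᶠ k in atTop, ∃ x ∈ S (q (ψ k)), ε/2 < infDist x (S qbar)) with hA | hA
    · obtain ⟨ρ, hρmono, hρ⟩ := Filter.extraction_of_frequently_atTop hA
      choose x hxmem hxgt using hρ
      have hx' : ∀ k, ∃ z, (z ∈ frontier Ω ∧ z ∈ q (ψ (ρ k)) +ᵥ W) ∧ φ z = x k := by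
        intro k
        have h := hxmem k
        rw [hS] at h
        obtain ⟨z, hz, hφz⟩ := h
        exact ⟨z, ⟨hz.1, hz.2⟩, hφz⟩
      choose z hzmem hφz using hx'
      obtain ⟨zbar, hzbarK, σ, hσmono, hσtend⟩ := hKcomp.tendsto_subseq (fun k => (hzmem k).1)
      have hqc : Tendsto (fun l => q (ψ (ρ (σ l)))) atTop (nhds qbar) :=
        hq.comp (((hψmono.comp hρmono).comp hσmono).tendsto_atTop)
      have hzbarW : zbar - qbar ∈ W := by
        apply hWclosed.mem_of_tendsto (hσtend.sub hqc)
        exact Filter.Eventually.of_forall fun l => (hvadd _ _).1 (hzmem (σ l)).2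
      have hφzbar : φ zbar ∈ S qbar := by
        rw [hS]
        exact ⟨zbar, ⟨hzbarK, (hvadd _ _).2 hzbarW⟩, rfl⟩
      have hdtend : Tendsto (fun l => dist (x (σ l)) (φ zbar)) atTop (nhds 0) := by
        have h := hφseq (fun l => z (σ l)) zbar (fun l => (hzmem (σ l)).1) hzbarK hσtend
        have heq : (fun l => dist (x (σ l)) (φ zbar))
            = fun l => dist (φ (z (σ l))) (φ zbar) := by
          funext l; rw [← hφz (σ l)]
        rw [heq]
        exact tendsto_iff_dist_tendsto_zero.1 h
      obtain ⟨l, hl⟩ := (hdtend.eventually_lt_const (by linarith : (0:ℝ) < ε/2)).exists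
      have hgt := hxgt (σ l)
      have hle : infDist (x (σ l)) (S qbar) ≤ dist (x (σ l)) (φ zbar) :=
        infDist_le_dist_of_mem hφzbar
      linarith
    · have hBfreq : ∃ᶠ k in atTop, ∃ y ∈ S qbar, ε/2 < infDist y (S (q (ψ k))) := by
        rw [Filter.not_frequently] at hA
        have h : ∀ᶠ k in atTop, ∃ y ∈ S qbar, ε/2 < infDist y (S (q (ψ k))) := by
          filter_upwards [hA] with k hk
          rcases hdisj k with h | h
          · exact absurd h hk
          · exact h
        exact h.frequently
      obtain ⟨ρ, hρmono, hρ⟩ := Filter.extraction_of_frequently_atTop hBfreq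
      choose y hymem hygt using hρ
      have hy' : ∀ k, ∃ z, (z ∈ frontier Ω ∧ z ∈ qbar +ᵥ W) ∧ φ z = y k := by
        intro k
        have h := hymem k
        rw [hS] at h
        obtain ⟨z, hz, hφz⟩ := h
        exact ⟨z, ⟨hz.1, hz.2⟩, hφz⟩
      choose z hzmem hφz using hy'
      obtain ⟨zbar, hzbarK, σ, hσmono, hσtend⟩ := hKcomp.tendsto_subseq (fun k => (hzmem k).1)
      have hzbarW : zbar ∈ qbar +ᵥ W :=
        hvaddclosed.mem_of_tendsto hσtend (Filter.Eventually.of_forall fun l => (hzmem (σ l)).2)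
      set wbar := zbar - qbar with hwbar
      have hwbarW : wbar ∈ W := (hvadd _ _).1 hzbarW
      have hzbar_eq : qbar + wbar = zbar := by rw [hwbar]; abel
      have hwbar_ne : wbar ≠ 0 := by
        rw [hwbar, sub_ne_zero]
        intro h
        exact hfr_not_mem zbar hzbarK (h ▸ hqbarmem)
      have hqc : Tendsto (fun l => q (ψ (ρ (σ l)))) atTop (nhds qbar) :=
        hq.comp (((hψmono.comp hρmono).comp hσmono).tendsto_atTop)
      have hexit1 : exitParam Ω qbar wbar = 1 :=
        exit_eq_one hΩopen hΩbdd hΩconv hqbarmem hwbar_ne (hzbar_eq ▸ hzbarK)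
      have hetend : Tendsto (fun l => exitParam Ω (q (ψ (ρ (σ l)))) wbar) atTop (nhds 1) := by
        rw [← hexit1]
        exact exit_tendsto hΩopen hΩbdd hΩconv (fun l => hqmem _) hqbarmem hwbar_ne hqc
      set c : ℕ → (Fin m → ℂ) × ℝ :=
        fun l => q (ψ (ρ (σ l))) + (exitParam Ω (q (ψ (ρ (σ l)))) wbar) • wbar with hcdef
      have hcK : ∀ l, c l ∈ frontier Ω := fun l =>
        exit_frontier hΩopen hΩbdd (subset_closure (hqmem _)) hwbar_ne
      have hcW : ∀ l, c l ∈ q (ψ (ρ (σ l))) +ᵥ W := by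
        intro l
        rw [hvadd]
        have : c l - q (ψ (ρ (σ l))) = (exitParam Ω (q (ψ (ρ (σ l)))) wbar) • wbar := by
          simp only [hcdef]; exact add_sub_cancel_left _ _
        rw [this]
        exact hWsmul _ _ hwbarW
      have hcS : ∀ l, φ (c l) ∈ S (q (ψ (ρ (σ l)))) := by
        intro l
        rw [hS]
        exact ⟨c l, ⟨hcK l, hcW l⟩, rfl⟩
      have hctend : Tendsto c atTop (nhds zbar) := by
        have h := hqc.add (hetend.smul_const wbar)
        rwa [one_smul, hzbar_eq] at h
      have h1 : Tendsto (fun l => φ (z (σ l))) atTop (nhds (φ zbar)) :=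
        hφseq _ zbar (fun l => (hzmem (σ l)).1) hzbarK hσtend
      have h2 : Tendsto (fun l => φ (c l)) atTop (nhds (φ zbar)) :=
        hφseq c zbar hcK hzbarK hctend
      have hdtend : Tendsto (fun l => dist (y (σ l)) (φ (c l))) atTop (nhds 0) := by
        have h := h1.dist h2
        simp only [dist_self] at h
        have heq : (fun l => dist (y (σ l)) (φ (c l)))
            = fun l => dist (φ (z (σ l))) (φ (c l)) := by
          funext l; rw [← hφz (σ l)]
        rwa [heq]
      obtain ⟨l, hl⟩ := (hdtend.eventually_lt_const (by linarith : (0:ℝ) < ε/2)).exists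
      have hgt := hygt (σ l)
      have hle : infDist (y (σ l)) (S (q (ψ (ρ (σ l))))) ≤ dist (y (σ l)) (φ (c l)) :=
        infDist_le_dist_of_mem (hcS l)
      linarith
  rw [Metric.tendsto_atTop]
  intro ε hε
  have h := key ε hε
  rw [Filter.eventually_atTop] at h
  obtain ⟨N, hN⟩ := h
  exact ⟨N, fun n hn => by
    rw [Real.dist_eq, sub_zero, abs_of_nonneg hausdorffDist_nonneg]
    exact hN n hn⟩
end
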